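/- For positive bounded operators A, B on a Hilbert space and 1 ≤ r < ∞, ‖A^r + B^r‖ ≤ ‖(A+B)^r‖. -/

import Mathlib

open scoped NNReal

/-- The Kantorovich constant. -/
noncomputable def Kc (x : ℝ) : ℝ := (x + 1) ^ 2 / (4 * x)

theorem stmt6 {𝒜 : Type*} [CStarAlgebra 𝒜] [PartialOrder 𝒜] [StarOrderedRing 𝒜]
    (A B : 𝒜) (hA : 0 ≤ A) (hB : 0 ≤ B) (r : ℝ) (hr : 1 ≤ r) :
    ‖CFC.rpow A r + CFC.rpow B r‖ ≤ ‖CFC.rpow (A + B) r‖ := by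
  obtain (h | h) := subsingleton_or_nontrivial 𝒜
  · rw [Subsingleton.elim (CFC.rpow A r + CFC.rpow B r) (CFC.rpow (A + B) r)]
  have hr0 : (0 : ℝ) ≤ r - 1 := by linarith
  have hC : (0 : 𝒜) ≤ A + B := add_nonneg hA hB
  set c : ℝ≥0 := ‖A + B‖₊ with hc
  set d : ℝ≥0 := c ^ (r - 1) with hd
  have hcont : Continuous (fun y : ℝ≥0 => y ^ r) :=
    NNReal.continuous_rpow_const (by linarith)
  have hmul : ∀ x : ℝ≥0, x ^ (r - 1) * x = x ^ r := fun x => by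
    calc x ^ (r - 1) * x = x ^ (r - 1) * x ^ (1 : ℝ) := by rw [NNReal.rpow_one]
      _ = x ^ (r - 1 + 1) := (NNReal.rpow_add_of_nonneg x hr0 zero_le_one).symm
      _ = x ^ r := by norm_num
  -- key pointwise estimate: if the spectrum of `a` is within `[0, c]`, then `a ^ r ≤ d • a`.
  have key : ∀ a : 𝒜, 0 ≤ a → (∀ x ∈ spectrum ℝ≥0 a, x ≤ c) → CFC.rpow a r ≤ d • a := by
    intro a ha hsa
    rw [show CFC.rpow a r = cfc (fun x : ℝ≥0 => x ^ r) a from rfl,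
      ← cfc_smul_id (R := ℝ≥0) d a ha]
    refine cfc_mono (fun x hx => ?_) hcont.continuousOn
      (Continuous.continuousOn (by fun_prop : Continuous fun x : ℝ≥0 => d • x))
    have hx' : x ≤ c := hsa x hx
    calc x ^ r = x ^ (r - 1) * x := (hmul x).symm
      _ ≤ c ^ (r - 1) * x := by gcongr
      _ = d • x := rfl
  have hspecA : ∀ x ∈ spectrum ℝ≥0 A, x ≤ c := fun x hx => by
    refine le_trans ?_
      (CStarAlgebra.nnnorm_le_nnnorm_of_nonneg_of_le hA (le_add_of_nonneg_right hB))
    simpa [cfc_id' ℝ≥0 A] using apply_le_nnnorm_cfc_nnreal (fun y : ℝ≥0 => y) A hx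
  have hspecB : ∀ x ∈ spectrum ℝ≥0 B, x ≤ c := fun x hx => by
    refine le_trans ?_
      (CStarAlgebra.nnnorm_le_nnnorm_of_nonneg_of_le hB (le_add_of_nonneg_left hA))
    simpa [cfc_id' ℝ≥0 B] using apply_le_nnnorm_cfc_nnreal (fun y : ℝ≥0 => y) B hx
  have hsum : CFC.rpow A r + CFC.rpow B r ≤ d • (A + B) := by
    rw [smul_add]
    exact add_le_add (key A hA hspecA) (key B hB hspecB)
  have h1 : ‖CFC.rpow A r + CFC.rpow B r‖₊ ≤ c ^ r := by
    calc ‖CFC.rpow A r + CFC.rpow B r‖₊ ≤ ‖d • (A + B)‖₊ :=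
          CStarAlgebra.nnnorm_le_nnnorm_of_nonneg_of_le
            (add_nonneg CFC.rpow_nonneg CFC.rpow_nonneg) hsum
      _ = d * c := by
          rw [NNReal.smul_def, nnnorm_smul, NNReal.nnnorm_eq]
      _ = c ^ r := hmul c
  have hcmem : c ∈ spectrum ℝ≥0 (A + B) := by
    have hg := IsGreatest.nnnorm_cfc_nnreal (fun y : ℝ≥0 => y) (A + B)
    rw [cfc_id' ℝ≥0 (A + B)] at hg
    obtain ⟨⟨x, hx, hxc⟩, -⟩ := hg
    exact (show x = c by simpa using hxc) ▸ hx
  have h2 : c ^ r ≤ ‖CFC.rpow (A + B) r‖₊ := by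
    have := apply_le_nnnorm_cfc_nnreal (fun y : ℝ≥0 => y ^ r) (A + B) hcmem
      hcont.continuousOn hC
    exact this
  calc ‖CFC.rpow A r + CFC.rpow B r‖ = (‖CFC.rpow A r + CFC.rpow B r‖₊ : ℝ) := rfl
    _ ≤ ((c ^ r : ℝ≥0) : ℝ) := by exact_mod_cast h1
    _ ≤ (‖CFC.rpow (A + B) r‖₊ : ℝ) := by exact_mod_cast h2
    _ = ‖CFC.rpow (A + B) r‖ := rfl
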